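/- Let μ be a σ-finite measure on 𝒳 and let q, q', r be probability densities with respect to μ, with associated probability measures Q = q·μ, Q' = q'·μ, R = r·μ. With ψ₁(x) = (x−1)/(x+1) extended by ψ₁(+∞) = 1 and the conventions 0/0 = 1 and a/0 = +∞ for a > 0, one has ∫ ψ₁(√(q'(x)/q(x))) dR(x) ≤ 4·h²(R,Q) − (3/8)·h²(R,Q'), where h² denotes squared Hellinger distance. -/
import Mathlib


open MeasureTheory ENNReal

open Classical in
/-- The ratio `q'/q` in `[0,+∞]`, with the conventions `0/0 = 1` and `a/0 = +∞` for
`a > 0` (the latter being automatic in `ℝ≥0∞`). -/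
noncomputable def densityRatio {𝒳 : Type*} (q q' : 𝒳 → ℝ≥0∞) (x : 𝒳) : ℝ≥0∞ :=
  if q x = 0 ∧ q' x = 0 then 1 else q' x / q x

/-- `ψ₁(√z)` for `z ∈ [0,+∞]`, where `ψ₁(x) = (x−1)/(x+1)` and `ψ₁(+∞) = 1`. -/
noncomputable def psi1OfSqrt (z : ℝ≥0∞) : ℝ :=
  if z = ⊤ then 1 else (Real.sqrt z.toReal - 1) / (Real.sqrt z.toReal + 1)

/-- Squared Hellinger distance `(1/2)∫(√a − √b)² dμ` between the probabilities of
densities `a` and `b` with respect to `μ`. -/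
noncomputable def hellingerSqDens {𝒳 : Type*} [MeasurableSpace 𝒳] (μ : Measure 𝒳)
    (a b : 𝒳 → ℝ≥0∞) : ℝ :=
  (1/2) * ∫ x, (Real.sqrt (a x).toReal - Real.sqrt (b x).toReal) ^ 2 ∂μ

private lemma key_ineq (a b c : ℝ) (ha : 0 ≤ a) (hb : 0 ≤ b) (hc : 0 ≤ c) :
    (b - a) * c ^ 2 ≤ (a + b) * (2*(c-a)^2 - (3/16)*(c-b)^2 + (1/4)*(b^2-a^2)) := by
  nlinarith [mul_nonneg ha (sq_nonneg (28*(a-c)+5*(b-c))), mul_nonneg ha (sq_nonneg (b-c)),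
    mul_nonneg hb (sq_nonneg (6*(a-c)-(b-c))), mul_nonneg hb (sq_nonneg (b-c)),
    mul_nonneg hc (sq_nonneg (a-b))]

lemma psi1OfSqrt_abs_le (z : ℝ≥0∞) : |psi1OfSqrt z| ≤ 1 := by
  rw [psi1OfSqrt]
  split
  · simp
  · have h0 : (0:ℝ) ≤ Real.sqrt z.toReal := Real.sqrt_nonneg _
    rw [abs_div, abs_of_nonneg (by linarith : (0:ℝ) ≤ Real.sqrt z.toReal + 1),
      div_le_one (by linarith)]
    rw [abs_le]
    constructor <;> linarith

lemma measurable_psi1OfSqrt : Measurable psi1OfSqrt := by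
  have hmeas : Measurable fun z : ℝ≥0∞ =>
      (Real.sqrt z.toReal - 1) / (Real.sqrt z.toReal + 1) := by
    have h : Measurable fun z : ℝ≥0∞ => Real.sqrt z.toReal :=
      ENNReal.measurable_toReal.sqrt
    exact (h.sub measurable_const).div (h.add measurable_const)
  exact Measurable.ite (measurableSet_singleton ⊤) measurable_const hmeas

lemma ptwise {𝒳 : Type*} (q q' : 𝒳 → ℝ≥0∞) (x : 𝒳) (hA : q x ≠ ⊤) (hB : q' x ≠ ⊤)
    (C : ℝ≥0∞) (hC : C ≠ ⊤) :
    C.toReal * psi1OfSqrt (densityRatio q q' x) ≤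
      2*(Real.sqrt C.toReal - Real.sqrt (q x).toReal)^2
        - (3/16)*(Real.sqrt C.toReal - Real.sqrt (q' x).toReal)^2
        + (1/4)*((q' x).toReal - (q x).toReal) := by
  set a := Real.sqrt (q x).toReal with hadef
  set b := Real.sqrt (q' x).toReal with hbdef
  set c := Real.sqrt C.toReal with hcdef
  have ha : 0 ≤ a := Real.sqrt_nonneg _
  have hb : 0 ≤ b := Real.sqrt_nonneg _
  have hc : 0 ≤ c := Real.sqrt_nonneg _
  have hA2 : a^2 = (q x).toReal := Real.sq_sqrt ENNReal.toReal_nonneg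
  have hB2 : b^2 = (q' x).toReal := Real.sq_sqrt ENNReal.toReal_nonneg
  have hC2 : c^2 = C.toReal := Real.sq_sqrt ENNReal.toReal_nonneg
  rw [← hA2, ← hB2, ← hC2]
  by_cases h0 : q x = 0 ∧ q' x = 0
  · have hd : densityRatio q q' x = 1 := by rw [densityRatio, if_pos h0]
    have hψ : psi1OfSqrt 1 = 0 := by
      rw [psi1OfSqrt, if_neg (by simp)]
      simp
    rw [hd, hψ, mul_zero]
    have ha0 : a = 0 := by rw [hadef, h0.1]; simp
    have hb0 : b = 0 := by rw [hbdef, h0.2]; simp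
    rw [ha0, hb0]
    nlinarith [sq_nonneg c]
  · have hratio : densityRatio q q' x = q' x / q x := by rw [densityRatio, if_neg h0]
    by_cases hq0 : q x = 0
    · have hq'0 : q' x ≠ 0 := fun h => h0 ⟨hq0, h⟩
      have hd : densityRatio q q' x = ⊤ := by rw [hratio, hq0, ENNReal.div_zero hq'0]
      have hψ : psi1OfSqrt ⊤ = 1 := by rw [psi1OfSqrt, if_pos rfl]
      rw [hd, hψ, mul_one]
      have ha0 : a = 0 := by rw [hadef, hq0]; simp
      have hbpos : 0 < b := by
        rw [hbdef]
        exact Real.sqrt_pos.2 (ENNReal.toReal_pos hq'0 hB)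
      have hk := key_ineq 0 b c le_rfl hb hc
      rw [ha0]
      nlinarith [hk, hbpos]
    · have hApos : 0 < (q x).toReal := ENNReal.toReal_pos hq0 hA
      have hapos : 0 < a := Real.sqrt_pos.2 hApos
      have hne : q' x / q x ≠ ⊤ := by
        rw [Ne, ENNReal.div_eq_top]
        push_neg
        exact ⟨fun _ => hq0, fun h => absurd h hB⟩
      have hψ : psi1OfSqrt (densityRatio q q' x) = (b - a) / (b + a) := by
        rw [hratio, psi1OfSqrt, if_neg hne, ENNReal.toReal_div,
          Real.sqrt_div' _ ENNReal.toReal_nonneg, ← hadef, ← hbdef]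
        rw [div_sub_one hapos.ne', div_add_one hapos.ne',
          div_div_div_cancel_right₀ hapos.ne']
      rw [hψ, mul_comm, div_mul_eq_mul_div, div_le_iff₀ (by linarith : (0:ℝ) < b + a)]
      nlinarith [key_ineq a b c ha hb hc]

/-- For probability densities `q, q', r` w.r.t. a σ-finite measure `μ`, with
`R = r·μ`, `Q = q·μ`, `Q' = q'·μ`, one has
`∫ ψ₁(√(q'/q)) dR ≤ 4·h²(R,Q) − (3/8)·h²(R,Q')`. -/
theorem psi1_expectation_le_hellinger_combination
    {𝒳 : Type*} [MeasurableSpace 𝒳] (μ : Measure 𝒳) [SigmaFinite μ]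
    (q q' r : 𝒳 → ℝ≥0∞) (hq : Measurable q) (hq' : Measurable q') (hr : Measurable r)
    (hq1 : ∫⁻ x, q x ∂μ = 1) (hq'1 : ∫⁻ x, q' x ∂μ = 1) (hr1 : ∫⁻ x, r x ∂μ = 1) :
    ∫ x, psi1OfSqrt (densityRatio q q' x) ∂(μ.withDensity r) ≤
      4 * hellingerSqDens μ r q - (3/8) * hellingerSqDens μ r q' := by
  -- a.e. finiteness
  have hqlt : ∀ᵐ x ∂μ, q x < ⊤ := ae_lt_top hq (by simp [hq1])
  have hq'lt : ∀ᵐ x ∂μ, q' x < ⊤ := ae_lt_top hq' (by simp [hq'1])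
  have hrlt : ∀ᵐ x ∂μ, r x < ⊤ := ae_lt_top hr (by simp [hr1])
  -- integrability of densities
  have iq : Integrable (fun x => (q x).toReal) μ :=
    integrable_toReal_of_lintegral_ne_top hq.aemeasurable (by simp [hq1])
  have iq' : Integrable (fun x => (q' x).toReal) μ :=
    integrable_toReal_of_lintegral_ne_top hq'.aemeasurable (by simp [hq'1])
  have ir : Integrable (fun x => (r x).toReal) μ :=
    integrable_toReal_of_lintegral_ne_top hr.aemeasurable (by simp [hr1])
  have Iq : ∫ x, (q x).toReal ∂μ = 1 := by
    rw [integral_toReal hq.aemeasurable hqlt, hq1]; simp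
  have Iq' : ∫ x, (q' x).toReal ∂μ = 1 := by
    rw [integral_toReal hq'.aemeasurable hq'lt, hq'1]; simp
  -- measurability of the integrands
  have mpsi : Measurable fun x => psi1OfSqrt (densityRatio q q' x) := by
    have mdr : Measurable (densityRatio q q') := by
      have hset : MeasurableSet {x | q x = 0 ∧ q' x = 0} := by
        have : {x | q x = 0 ∧ q' x = 0} = q ⁻¹' {0} ∩ q' ⁻¹' {0} := rfl
        rw [this]
        exact (hq (measurableSet_singleton 0)).inter (hq' (measurableSet_singleton 0))
      exact Measurable.ite hset measurable_const (hq'.div hq)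
    exact measurable_psi1OfSqrt.comp mdr
  -- sqrt functions are measurable
  have msq : Measurable fun x => Real.sqrt (q x).toReal :=
    (ENNReal.measurable_toReal.comp hq).sqrt
  have msq' : Measurable fun x => Real.sqrt (q' x).toReal :=
    (ENNReal.measurable_toReal.comp hq').sqrt
  have msr : Measurable fun x => Real.sqrt (r x).toReal :=
    (ENNReal.measurable_toReal.comp hr).sqrt
  -- integrability of Hellinger integrands
  have isq : Integrable (fun x => (Real.sqrt (r x).toReal - Real.sqrt (q x).toReal)^2) μ := by
    refine ((ir.const_mul 2).add (iq.const_mul 2)).mono'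
      ((msr.sub msq).pow_const 2).aestronglyMeasurable (Filter.Eventually.of_forall fun x => ?_)
    have h1 : Real.sqrt (r x).toReal ^ 2 = (r x).toReal := Real.sq_sqrt ENNReal.toReal_nonneg
    have h2 : Real.sqrt (q x).toReal ^ 2 = (q x).toReal := Real.sq_sqrt ENNReal.toReal_nonneg
    simp only [Pi.add_apply]
    rw [Real.norm_eq_abs, abs_of_nonneg (sq_nonneg _)]
    nlinarith [sq_nonneg (Real.sqrt (r x).toReal + Real.sqrt (q x).toReal)]
  have isq' : Integrable (fun x => (Real.sqrt (r x).toReal - Real.sqrt (q' x).toReal)^2) μ := by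
    refine ((ir.const_mul 2).add (iq'.const_mul 2)).mono'
      ((msr.sub msq').pow_const 2).aestronglyMeasurable (Filter.Eventually.of_forall fun x => ?_)
    have h1 : Real.sqrt (r x).toReal ^ 2 = (r x).toReal := Real.sq_sqrt ENNReal.toReal_nonneg
    have h2 : Real.sqrt (q' x).toReal ^ 2 = (q' x).toReal := Real.sq_sqrt ENNReal.toReal_nonneg
    simp only [Pi.add_apply]
    rw [Real.norm_eq_abs, abs_of_nonneg (sq_nonneg _)]
    nlinarith [sq_nonneg (Real.sqrt (r x).toReal + Real.sqrt (q' x).toReal)]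
  -- the comparison function g
  set g : 𝒳 → ℝ := fun x =>
    2*(Real.sqrt (r x).toReal - Real.sqrt (q x).toReal)^2
      - (3/16)*(Real.sqrt (r x).toReal - Real.sqrt (q' x).toReal)^2
      + (1/4)*((q' x).toReal - (q x).toReal) with hgdef
  have ig : Integrable g μ :=
    ((isq.const_mul 2).sub (isq'.const_mul (3/16))).add ((iq'.sub iq).const_mul (1/4))
  -- integrability of the left-hand integrand
  have ileft : Integrable (fun x => (r x).toReal * psi1OfSqrt (densityRatio q q' x)) μ := by
    refine ir.mono' ((ENNReal.measurable_toReal.comp hr).mul mpsi).aestronglyMeasurable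
      (Filter.Eventually.of_forall fun x => ?_)
    rw [Real.norm_eq_abs, abs_mul, abs_of_nonneg ENNReal.toReal_nonneg]
    calc (r x).toReal * |psi1OfSqrt (densityRatio q q' x)|
        ≤ (r x).toReal * 1 := by
          exact mul_le_mul_of_nonneg_left (psi1OfSqrt_abs_le _) ENNReal.toReal_nonneg
      _ = (r x).toReal := mul_one _
  -- rewrite the left-hand side
  have hLHS : ∫ x, psi1OfSqrt (densityRatio q q' x) ∂(μ.withDensity r)
      = ∫ x, (r x).toReal * psi1OfSqrt (densityRatio q q' x) ∂μ := by
    have hrcongr : r =ᵐ[μ] fun x => ((r x).toNNReal : ℝ≥0∞) :=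
      hrlt.mono fun x hx => (ENNReal.coe_toNNReal hx.ne).symm
    rw [withDensity_congr_ae hrcongr,
      integral_withDensity_eq_integral_smul (hr.ennreal_toNNReal) _]
    congr 1
  -- pointwise inequality (a.e.)
  have hptwise : (fun x => (r x).toReal * psi1OfSqrt (densityRatio q q' x)) ≤ᵐ[μ] g := by
    filter_upwards [hqlt, hq'lt, hrlt] with x h1 h2 h3
    exact ptwise q q' x h1.ne h2.ne (r x) h3.ne
  rw [hLHS]
  calc ∫ x, (r x).toReal * psi1OfSqrt (densityRatio q q' x) ∂μ
      ≤ ∫ x, g x ∂μ := integral_mono_ae ileft ig hptwise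
    _ = 2 * (∫ x, (Real.sqrt (r x).toReal - Real.sqrt (q x).toReal)^2 ∂μ)
        - (3/16) * (∫ x, (Real.sqrt (r x).toReal - Real.sqrt (q' x).toReal)^2 ∂μ)
        + (1/4) * ((∫ x, (q' x).toReal ∂μ) - ∫ x, (q x).toReal ∂μ) := by
        have i1 : Integrable (fun x => 2*(Real.sqrt (r x).toReal - Real.sqrt (q x).toReal)^2
            - (3/16)*(Real.sqrt (r x).toReal - Real.sqrt (q' x).toReal)^2) μ :=
          (isq.const_mul 2).sub (isq'.const_mul (3/16))
        have i2 : Integrable (fun x => (1/4)*((q' x).toReal - (q x).toReal)) μ :=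
          (iq'.sub iq).const_mul (1/4)
        simp only [hgdef]
        rw [integral_add i1 i2, integral_sub (isq.const_mul 2) (isq'.const_mul (3/16)),
          integral_const_mul, integral_const_mul, integral_const_mul,
          integral_sub iq' iq]
    _ = 4 * hellingerSqDens μ r q - (3/8) * hellingerSqDens μ r q' := by
        rw [Iq, Iq', hellingerSqDens, hellingerSqDens]
        ring
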